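/- For 7 ≤ v ≤ 14, the maximum number of blocks in a partial Steiner triple system of order v in which no two blocks are disjoint equals 7 (achieved by the Fano plane). -/

import Mathlib

set_option maxRecDepth 8000

private def fano : Finset (Finset (Fin 7)) :=
  {{0,1,2},{0,3,4},{0,5,6},{1,3,5},{1,4,6},{2,3,6},{2,4,5}}

private lemma fano_card : fano.card = 7 := by decide
private lemma fano_block_card : ∀ b ∈ fano, b.card = 3 := by decide
private lemma fano_linear : ∀ b1 ∈ fano, ∀ b2 ∈ fano, ∀ p q : Fin 7,
    p ≠ q → p ∈ b1 → q ∈ b1 → p ∈ b2 → q ∈ b2 → b1 = b2 := by decide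
private lemma fano_intersecting : ∀ b1 ∈ fano, ∀ b2 ∈ fano, b1 ≠ b2 → ¬ Disjoint b1 b2 := by decide

theorem stmt_14 (v : ℕ) (hv7 : 7 ≤ v) (hv14 : v ≤ 14) :
    IsGreatest {n : ℕ | ∃ B : Finset (Finset (Fin v)),
      (∀ b ∈ B, b.card = 3) ∧
      (∀ x y : Fin v, x ≠ y → (B.filter (fun b => x ∈ b ∧ y ∈ b)).card ≤ 1) ∧
      B.Nonempty ∧
      (∀ b1 ∈ B, ∀ b2 ∈ B, b1 ≠ b2 → ¬ Disjoint b1 b2) ∧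
      B.card = n} 7 := by
  constructor
  · -- membership: the Fano plane
    set e : Fin 7 ↪ Fin v := Fin.castLEEmb hv7 with he
    set f : Finset (Fin 7) ↪ Finset (Fin v) :=
      ⟨fun b => b.map e, fun a b h => Finset.map_injective e h⟩ with hf
    refine ⟨fano.map f, ?_, ?_, ?_, ?_, ?_⟩
    · intro b hb
      rcases Finset.mem_map.1 hb with ⟨a, ha, rfl⟩
      change (a.map e).card = 3
      simpa [hf, Finset.card_map] using fano_block_card a ha
    · intro x y hxy
      rw [Finset.card_le_one]
      intro b1 hb1 b2 hb2
      rcases Finset.mem_filter.1 hb1 with ⟨hb1', hx1, hy1⟩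
      rcases Finset.mem_filter.1 hb2 with ⟨hb2', hx2, hy2⟩
      rcases Finset.mem_map.1 hb1' with ⟨a1, ha1, rfl⟩
      rcases Finset.mem_map.1 hb2' with ⟨a2, ha2, rfl⟩
      change x ∈ a1.map e at hx1
      change y ∈ a1.map e at hy1
      change x ∈ a2.map e at hx2
      change y ∈ a2.map e at hy2
      simp only [hf, Function.Embedding.coeFn_mk, Finset.mem_map] at hx1 hy1 hx2 hy2
      rcases hx1 with ⟨p1, hp1, hpe1⟩
      rcases hy1 with ⟨q1, hq1, hqe1⟩
      rcases hx2 with ⟨p2, hp2, hpe2⟩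
      rcases hy2 with ⟨q2, hq2, hqe2⟩
      have hp : p1 = p2 := e.injective (hpe1.trans hpe2.symm)
      have hq : q1 = q2 := e.injective (hqe1.trans hqe2.symm)
      subst hp; subst hq
      have hpq : p1 ≠ q1 := by rintro rfl; exact hxy (hpe1 ▸ hqe1 ▸ rfl)
      have := fano_linear a1 ha1 a2 ha2 p1 q1 hpq hp1 hq1 hp2 hq2
      rw [this]
    · exact (Finset.map_nonempty).2 ⟨{0,1,2}, by decide⟩
    · intro b1 hb1 b2 hb2 hne
      rcases Finset.mem_map.1 hb1 with ⟨a1, ha1, rfl⟩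
      rcases Finset.mem_map.1 hb2 with ⟨a2, ha2, rfl⟩
      have hane : a1 ≠ a2 := fun h => hne (by rw [h])
      have := fano_intersecting a1 ha1 a2 ha2 hane
      change ¬Disjoint (a1.map e) (a2.map e)
      simpa [hf, Finset.disjoint_map] using this
    · rw [Finset.card_map, fano_card]
  · -- upper bound
    rintro n ⟨B, hcard3, hlin, ⟨b1, hb1⟩, hint, rfl⟩
    have key : ∀ b ∈ B, ∀ b' ∈ B, ∀ x y : Fin v, x ≠ y →
        x ∈ b → y ∈ b → x ∈ b' → y ∈ b' → b = b' := by
      intro b hb b' hb' x y hxy hxb hyb hxb' hyb'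
      by_contra hne
      have h2 : 2 ≤ (B.filter (fun c => x ∈ c ∧ y ∈ c)).card := by
        apply Finset.one_lt_card.2
        exact ⟨b, Finset.mem_filter.2 ⟨hb, hxb, hyb⟩,
               b', Finset.mem_filter.2 ⟨hb', hxb', hyb'⟩, hne⟩
      exact absurd (hlin x y hxy) (by omega)
    by_cases hstar : ∃ x : Fin v, ∀ b ∈ B, x ∈ b
    · -- star case: B.card ≤ 6
      rcases hstar with ⟨x, hx⟩
      set C : Finset (Finset (Fin v)) := B.image (fun b => b.erase x) with hC
      have hCcard : C.card = B.card := by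
        apply Finset.card_image_of_injOn
        intro b hb b' hb' h
        simp only at h
        have : insert x (b.erase x) = insert x (b'.erase x) := by rw [h]
        rwa [Finset.insert_erase (hx b hb), Finset.insert_erase (hx b' hb')] at this
      have hc2 : ∀ c ∈ C, c.card = 2 := by
        intro c hc
        rcases Finset.mem_image.1 hc with ⟨a, ha, rfl⟩
        rw [Finset.card_erase_of_mem (hx a ha), hcard3 a ha]
      have hdisj : ∀ c1 ∈ C, ∀ c2 ∈ C, c1 ≠ c2 → Disjoint (id c1) (id c2) := by
        intro c1 hc1 c2 hc2 hne
        rcases Finset.mem_image.1 hc1 with ⟨a1, ha1, rfl⟩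
        rcases Finset.mem_image.1 hc2 with ⟨a2, ha2, rfl⟩
        rw [id, id, Finset.disjoint_left]
        intro y hy1 hy2
        have hyx : y ≠ x := Finset.ne_of_mem_erase hy1
        have := key a1 ha1 a2 ha2 y x hyx (Finset.mem_of_mem_erase hy1) (hx a1 ha1)
          (Finset.mem_of_mem_erase hy2) (hx a2 ha2)
        exact hne (by rw [this])
      have hunion : (C.biUnion id).card = 2 * C.card := by
        rw [Finset.card_biUnion hdisj]
        calc ∑ c ∈ C, (id c).card = ∑ _c ∈ C, 2 := Finset.sum_congr rfl (fun c hc => hc2 c hc)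
        _ = 2 * C.card := by rw [Finset.sum_const, smul_eq_mul, Nat.mul_comm]
      have hsub : C.biUnion id ⊆ Finset.univ.erase x := by
        intro y hy
        rcases Finset.mem_biUnion.1 hy with ⟨c, hc, hyc⟩
        rcases Finset.mem_image.1 hc with ⟨a, ha, rfl⟩
        exact Finset.mem_erase.2 ⟨Finset.ne_of_mem_erase hyc, Finset.mem_univ y⟩
      have hle : (C.biUnion id).card ≤ v - 1 := by
        calc (C.biUnion id).card ≤ (Finset.univ.erase x).card := Finset.card_le_card hsub
        _ = v - 1 := by rw [Finset.card_erase_of_mem (Finset.mem_univ x), Finset.card_univ,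
          Fintype.card_fin]
      omega
    · -- non-star case
      push_neg at hstar
      -- degree bound: every point is in at most 3 blocks
      have hdeg : ∀ x : Fin v, (B.filter (fun b => x ∈ b)).card ≤ 3 := by
        intro x
        rcases hstar x with ⟨b0, hb0, hxb0⟩
        have h3 : b0.card = 3 := hcard3 b0 hb0
        rw [← h3]
        apply Finset.card_le_card_of_injOn
          (fun b => if h : (b ∩ b0).Nonempty then (b ∩ b0).min' h else x)
        · intro b hb
          rcases Finset.mem_filter.1 hb with ⟨hbB, hxb⟩
          have hne : b ≠ b0 := fun h => hxb0 (h ▸ hxb)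
          have hnd := hint b hbB b0 hb0 hne
          rw [Finset.not_disjoint_iff] at hnd
          rcases hnd with ⟨y, hy1, hy2⟩
          have hN : (b ∩ b0).Nonempty := ⟨y, Finset.mem_inter.2 ⟨hy1, hy2⟩⟩
          simp only [dif_pos hN]
          exact (Finset.mem_inter.1 ((b ∩ b0).min'_mem hN)).2
        · intro b hb b' hb' heq
          simp only [Finset.coe_filter, Set.mem_setOf_eq] at hb hb'
          obtain ⟨hbB, hxb⟩ := hb
          obtain ⟨hb'B, hxb'⟩ := hb'
          have hnd := hint b hbB b0 hb0 (fun h => hxb0 (h ▸ hxb))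
          rw [Finset.not_disjoint_iff] at hnd
          rcases hnd with ⟨y, hy1, hy2⟩
          have hN : (b ∩ b0).Nonempty := ⟨y, Finset.mem_inter.2 ⟨hy1, hy2⟩⟩
          have hnd' := hint b' hb'B b0 hb0 (fun h => hxb0 (h ▸ hxb'))
          rw [Finset.not_disjoint_iff] at hnd'
          rcases hnd' with ⟨y', hy1', hy2'⟩
          have hN' : (b' ∩ b0).Nonempty := ⟨y', Finset.mem_inter.2 ⟨hy1', hy2'⟩⟩
          simp only [dif_pos hN, dif_pos hN'] at heq
          set z := (b ∩ b0).min' hN with hz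
          have hzb : z ∈ b := (Finset.mem_inter.1 ((b ∩ b0).min'_mem hN)).1
          have hzb0 : z ∈ b0 := (Finset.mem_inter.1 ((b ∩ b0).min'_mem hN)).2
          have hzb' : z ∈ b' := by
            rw [heq]
            exact (Finset.mem_inter.1 ((b' ∩ b0).min'_mem hN')).1
          have hzx : z ≠ x := fun h => hxb0 (h ▸ hzb0)
          exact key b hbB b' hb'B z x hzx hzb hxb hzb' hxb'
      -- every block other than b1 meets b1; each point of b1 in ≤ 2 other blocks
      have hsub : B.erase b1 ⊆ b1.biUnion (fun p => (B.erase b1).filter (fun b => p ∈ b)) := by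
        intro b hb
        have hbB := Finset.mem_of_mem_erase hb
        have hne := Finset.ne_of_mem_erase hb
        have hnd := hint b hbB b1 hb1 hne
        rw [Finset.not_disjoint_iff] at hnd
        rcases hnd with ⟨p, hp1, hp2⟩
        exact Finset.mem_biUnion.2 ⟨p, hp2, Finset.mem_filter.2 ⟨hb, hp1⟩⟩
      have hfilter2 : ∀ p ∈ b1, ((B.erase b1).filter (fun b => p ∈ b)).card ≤ 2 := by
        intro p hp
        have h1 : (B.erase b1).filter (fun b => p ∈ b) = (B.filter (fun b => p ∈ b)).erase b1 :=
          Finset.filter_erase _ b1 B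
        rw [h1]
        have hb1mem : b1 ∈ B.filter (fun b => p ∈ b) := Finset.mem_filter.2 ⟨hb1, hp⟩
        have := hdeg p
        rw [Finset.card_erase_of_mem hb1mem]
        omega
      have hB1 : (B.erase b1).card ≤ 6 := by
        calc (B.erase b1).card ≤ (b1.biUnion (fun p => (B.erase b1).filter (fun b => p ∈ b))).card :=
              Finset.card_le_card hsub
        _ ≤ ∑ p ∈ b1, ((B.erase b1).filter (fun b => p ∈ b)).card := Finset.card_biUnion_le
        _ ≤ ∑ p ∈ b1, 2 := Finset.sum_le_sum hfilter2
        _ = 6 := by rw [Finset.sum_const, hcard3 b1 hb1]; rfl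
      have := Finset.card_erase_of_mem hb1
      have hpos : 1 ≤ B.card := Finset.card_pos.2 ⟨b1, hb1⟩
      omega
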